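/- Let (X_v)_{v∈V} be a family of random variables on a probability space (Ω, 𝓕, P) indexed by a finite set V, each valued in a nonempty finite type, whose conditional independence relation satisfies the intersection property, and let C ∈ V. If M₁ and M₂ are both Markov blankets of C, then M₁ ∩ M₂ is a Markov blanket of C. Consequently, the Markov boundary of C is unique: any two Markov boundaries of C are equal. -/

import Mathlib

open MeasureTheory ProbabilityTheory Set

namespace CFS

variable {V : Type*}

/-- Parents of `v`: vertices with an edge into `v`. -/
def Pa (E : V → V → Prop) (v : V) : Set V := {u | E u v}

/-- Children of `v`: vertices with an edge from `v`. -/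
def Ch (E : V → V → Prop) (v : V) : Set V := {u | E v u}

/-- Descendants of `v`: vertices reachable from `v` by a nonempty directed path. -/
def Desc (E : V → V → Prop) (v : V) : Set V := {u | Relation.TransGen E v u}

/-- Spouses of `v`: the other parents of the children of `v`. -/
def Sp (E : V → V → Prop) (v : V) : Set V := {u | u ≠ v ∧ ∃ w, E u w ∧ E v w}

/-- The Markov blanket set `mb(v)` in the graph: parents, children and spouses. -/
def mb (E : V → V → Prop) (v : V) : Set V := Pa E v ∪ Ch E v ∪ Sp E v

/-- The edge relation is acyclic (defines a DAG). -/
def Acyclic (E : V → V → Prop) : Prop := ∀ v, ¬ Relation.TransGen E v v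

/-- Adjacency: an edge in either direction. -/
def Adj (E : V → V → Prop) (u v : V) : Prop := E u v ∨ E v u

/-- `f 0, f 1, …, f n` is an undirected path between `i` and `j`:
distinct vertices, consecutive ones adjacent. -/
structure IsUPath (E : V → V → Prop) (i j : V) (n : ℕ) (f : ℕ → V) : Prop where
  pos : 0 < n
  start : f 0 = i
  finish : f n = j
  inj : ∀ s ≤ n, ∀ t ≤ n, f s = f t → s = t
  adj : ∀ t < n, Adj E (f t) (f (t + 1))

/-- The interior vertex at position `t` of the path `f` is a collider:
both incident edges of the path point into it. -/
def ColliderAt (E : V → V → Prop) (f : ℕ → V) (t : ℕ) : Prop :=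
  E (f (t - 1)) (f t) ∧ E (f (t + 1)) (f t)

/-- The path `f 0, …, f n` is blocked by `S`: some interior non-collider lies in `S`,
or some interior collider is such that neither it nor any of its descendants lies in `S`. -/
def Blocked (E : V → V → Prop) (S : Set V) (n : ℕ) (f : ℕ → V) : Prop :=
  ∃ t, 0 < t ∧ t < n ∧
    ((¬ ColliderAt E f t ∧ f t ∈ S) ∨
      (ColliderAt E f t ∧ f t ∉ S ∧ ∀ d ∈ Desc E (f t), d ∉ S))

/-- `i` and `j` are d-separated by `S`: every undirected path between them is blocked by `S`. -/
def DSep (E : V → V → Prop) (i j : V) (S : Set V) : Prop :=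
  ∀ n f, IsUPath E i j n f → Blocked E S n f

/-- The sets `A` and `B` are d-separated by `S`. -/
def DSepSet (E : V → V → Prop) (A B S : Set V) : Prop :=
  ∀ i ∈ A, ∀ j ∈ B, DSep E i j S

variable {Ω Val : Type*} [mΩ : MeasurableSpace Ω] [MeasurableSpace Val]

/-- The σ-algebra generated by the family of random variables `(X v)_{v ∈ A}`. -/
def famSigma (X : V → Ω → Val) (A : Set V) : MeasurableSpace Ω :=
  ⨆ v ∈ A, MeasurableSpace.comap (X v) inferInstance

theorem famSigma_le {X : V → Ω → Val} (hX : ∀ v, Measurable (X v)) (A : Set V) :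
    famSigma X A ≤ mΩ :=
  iSup₂_le fun v _ => (hX v).comap_le

/-- The families `(X a)_{a ∈ A}` and `(X b)_{b ∈ B}` are conditionally independent
given the family `(X s)_{s ∈ S}`. -/
def CondIndepFam [StandardBorelSpace Ω] (X : V → Ω → Val) (hX : ∀ v, Measurable (X v))
    (P : Measure Ω) [IsFiniteMeasure P] (S A B : Set V) : Prop :=
  CondIndep (famSigma X S) (famSigma X A) (famSigma X B) (famSigma_le hX S) P

/-- The Markov condition: every variable is conditionally independent of its
non-descendants (other than itself and its parents) given its parents. -/
def MarkovCondition [StandardBorelSpace Ω] (E : V → V → Prop) (X : V → Ω → Val)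
    (hX : ∀ v, Measurable (X v)) (P : Measure Ω) [IsFiniteMeasure P] : Prop :=
  ∀ v, CondIndepFam X hX P (Pa E v) {v} (univ \ ({v} ∪ Desc E v ∪ Pa E v))

/-- `M ⊆ V \ {C}` is a Markov blanket of `C`: conditioned on `(X m)_{m ∈ M}`,
all other variables are independent of `X C`. -/
def IsMarkovBlanket [StandardBorelSpace Ω] (X : V → Ω → Val) (hX : ∀ v, Measurable (X v))
    (P : Measure Ω) [IsFiniteMeasure P] (C : V) (M : Set V) : Prop :=
  C ∉ M ∧ CondIndepFam X hX P M {C} (univ \ (M ∪ {C}))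

/-- A Markov boundary of `C` is a Markov blanket of `C` no proper subset of which
is a Markov blanket of `C`. -/
def IsMarkovBoundary [StandardBorelSpace Ω] (X : V → Ω → Val) (hX : ∀ v, Measurable (X v))
    (P : Measure Ω) [IsFiniteMeasure P] (C : V) (M : Set V) : Prop :=
  IsMarkovBlanket X hX P C M ∧ ∀ M' ⊂ M, ¬ IsMarkovBlanket X hX P C M'

/-- Faithfulness: conditional independence holds exactly when d-separation holds. -/
def Faithful [StandardBorelSpace Ω] (E : V → V → Prop) (X : V → Ω → Val)
    (hX : ∀ v, Measurable (X v)) (P : Measure Ω) [IsFiniteMeasure P] : Prop :=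
  ∀ A B S : Set V, A.Nonempty → B.Nonempty →
    Disjoint A B → Disjoint A S → Disjoint B S →
    (CondIndepFam X hX P S A B ↔ DSepSet E A B S)

/-- `v` is strongly relevant to `C`: `X C` and `X v` are not conditionally independent
given all the remaining variables. -/
def StronglyRelevant [StandardBorelSpace Ω] (X : V → Ω → Val) (hX : ∀ v, Measurable (X v))
    (P : Measure Ω) [IsFiniteMeasure P] (C v : V) : Prop :=
  ¬ CondIndepFam X hX P (univ \ {C, v}) {C} {v}

end CFS

open CFS

/-- The conditional independence relation of the family satisfies the intersection
property. -/
def IntersectionProperty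
    {V Ω Val : Type*} [MeasurableSpace Ω] [StandardBorelSpace Ω] [MeasurableSpace Val]
    (X : V → Ω → Val) (hX : ∀ v, Measurable (X v))
    (P : MeasureTheory.Measure Ω) [MeasureTheory.IsFiniteMeasure P] : Prop :=
  ∀ A B D S : Set V, A.Nonempty → B.Nonempty → D.Nonempty →
    Disjoint A B → Disjoint A D → Disjoint A S →
    Disjoint B D → Disjoint B S → Disjoint D S →
    CondIndepFam X hX P (S ∪ D) A B → CondIndepFam X hX P (S ∪ B) A D →
    CondIndepFam X hX P S A (B ∪ D)

section WeakUnion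

lemma aux_sup_eq_generateFrom_inter {Ω' : Type*} (m₁ m₂ : MeasurableSpace Ω') :
    m₁ ⊔ m₂ = MeasurableSpace.generateFrom
      {s | ∃ u v, MeasurableSet[m₁] u ∧ MeasurableSet[m₂] v ∧ s = u ∩ v} := by
  apply le_antisymm
  · refine sup_le ?_ ?_
    · intro s hs
      exact MeasurableSpace.measurableSet_generateFrom
        ⟨s, univ, hs, MeasurableSet.univ, (inter_univ s).symm⟩
    · intro s hs
      exact MeasurableSpace.measurableSet_generateFrom
        ⟨univ, s, MeasurableSet.univ, hs, (univ_inter s).symm⟩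
  · refine MeasurableSpace.generateFrom_le ?_
    rintro s ⟨u, v, hu, hv, rfl⟩
    exact ((le_sup_left : m₁ ≤ m₁ ⊔ m₂) u hu).inter ((le_sup_right : m₂ ≤ m₁ ⊔ m₂) v hv)

lemma aux_condExp_indicator_sup_of_condIndep {Ω' : Type*}
    {m' m₁ m₂ : MeasurableSpace Ω'} [mΩ' : MeasurableSpace Ω'] [StandardBorelSpace Ω']
    {μ : MeasureTheory.Measure Ω'} [MeasureTheory.IsFiniteMeasure μ]
    (hm' : m' ≤ mΩ') (hm₁ : m₁ ≤ mΩ') (hm₂ : m₂ ≤ mΩ')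
    (h : ProbabilityTheory.CondIndep m' m₁ m₂ hm' μ) {t : Set Ω'} (ht : MeasurableSet[m₁] t) :
    μ[t.indicator (fun _ => (1:ℝ))|m' ⊔ m₂] =ᵐ[μ] μ[t.indicator (fun _ => (1:ℝ))|m'] := by
  have hprod := (ProbabilityTheory.condIndep_iff m' m₁ m₂ hm' hm₁ hm₂ μ).mp h
  have htΩ : MeasurableSet[mΩ'] t := hm₁ t ht
  set f : Ω' → ℝ := t.indicator (fun _ => (1:ℝ)) with hf_def
  have hf_int : Integrable f μ := (integrable_const (1:ℝ)).indicator htΩ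
  have hsup : m' ⊔ m₂ ≤ mΩ' := sup_le hm' hm₂
  have hpi : IsPiSystem {s : Set Ω' | ∃ u v,
      MeasurableSet[m'] u ∧ MeasurableSet[m₂] v ∧ s = u ∩ v} := by
    rintro s ⟨u, v, hu, hv, rfl⟩ s' ⟨u', v', hu', hv', rfl⟩ -
    exact ⟨u ∩ u', v ∩ v', hu.inter hu', hv.inter hv', (Set.inter_inter_inter_comm u v u' v')⟩
  have key : ∀ ⦃s : Set Ω'⦄, MeasurableSet[m' ⊔ m₂] s →
      ∫ x in s, (μ[f|m']) x ∂μ = ∫ x in s, f x ∂μ := by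
    refine MeasurableSpace.induction_on_inter (m := m' ⊔ m₂)
      (aux_sup_eq_generateFrom_inter m' m₂) hpi (by simp) ?_ ?_ ?_
    · rintro s ⟨u, v, hu, hv, rfl⟩
      have huΩ : MeasurableSet[mΩ'] u := hm' u hu
      have hvΩ : MeasurableSet[mΩ'] v := hm₂ v hv
      have hmul : ∀ (h : Ω' → ℝ),
          (h * v.indicator (fun _ => (1:ℝ))) = v.indicator h := by
        intro h; funext ω; by_cases hω : ω ∈ v <;>
          simp [hω, Set.indicator_of_mem, Set.indicator_of_notMem]
      have e_int : Integrable ((μ[f|m']) * v.indicator (fun _ => (1:ℝ))) μ := by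
        rw [hmul]
        exact integrable_condExp.indicator hvΩ
      calc ∫ x in u ∩ v, (μ[f|m']) x ∂μ
          = ∫ x in u, v.indicator (μ[f|m']) x ∂μ := (setIntegral_indicator hvΩ).symm
        _ = ∫ x in u, ((μ[f|m']) * v.indicator (fun _ => (1:ℝ))) x ∂μ := by rw [hmul]
        _ = ∫ x in u, (μ[(μ[f|m']) * v.indicator (fun _ => (1:ℝ))|m']) x ∂μ :=
            (setIntegral_condExp hm' e_int hu).symm
        _ = ∫ x in u, ((μ[f|m']) * (μ[v.indicator (fun _ => (1:ℝ))|m'])) x ∂μ := by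
            refine setIntegral_congr_ae huΩ ?_
            filter_upwards [condExp_mul_of_stronglyMeasurable_left stronglyMeasurable_condExp e_int
              ((integrable_const (1:ℝ)).indicator hvΩ)] with ω hω _
            exact hω
        _ = ∫ x in u, (μ[(t ∩ v).indicator (fun _ => (1:ℝ))|m']) x ∂μ := by
            refine setIntegral_congr_ae huΩ ?_
            filter_upwards [hprod t v ht hv] with ω hω _
            exact hω.symm
        _ = ∫ x in u, (t ∩ v).indicator (fun _ => (1:ℝ)) x ∂μ :=
            setIntegral_condExp hm' ((integrable_const (1:ℝ)).indicator (htΩ.inter hvΩ)) hu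
        _ = ∫ _x in u ∩ (t ∩ v), (1:ℝ) ∂μ := setIntegral_indicator (htΩ.inter hvΩ)
        _ = ∫ _x in (u ∩ v) ∩ t, (1:ℝ) ∂μ := by
            rw [show u ∩ (t ∩ v) = (u ∩ v) ∩ t by rw [inter_comm t v, inter_assoc]]
        _ = ∫ x in u ∩ v, f x ∂μ := (setIntegral_indicator htΩ).symm
    · intro s hs hint
      have hsΩ : MeasurableSet[mΩ'] s := hsup s hs
      have h1 := integral_add_compl hsΩ (integrable_condExp : Integrable (μ[f|m']) μ)
      have h2 := integral_add_compl hsΩ hf_int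
      have h3 : ∫ x, (μ[f|m']) x ∂μ = ∫ x, f x ∂μ := integral_condExp hm'
      linarith
    · intro g hdisj hmeas heq
      have hmΩ : ∀ i, MeasurableSet[mΩ'] (g i) := fun i => hsup _ (hmeas i)
      rw [integral_iUnion hmΩ hdisj integrable_condExp.integrableOn,
          integral_iUnion hmΩ hdisj hf_int.integrableOn]
      exact tsum_congr heq
  exact (ae_eq_condExp_of_forall_setIntegral_eq hsup hf_int
    (fun s _ _ => integrable_condExp.integrableOn)
    (fun s hs _ => key hs)
    (StronglyMeasurable.aestronglyMeasurable (μ := μ) (stronglyMeasurable_condExp.mono le_sup_left))).symm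

lemma aux_condIndep_weakUnion {Ω' : Type*}
    {m' m₁ m₂ m₃ : MeasurableSpace Ω'} [mΩ' : MeasurableSpace Ω'] [StandardBorelSpace Ω']
    {μ : MeasureTheory.Measure Ω'} [MeasureTheory.IsFiniteMeasure μ]
    (hm' : m' ≤ mΩ') (hm₁ : m₁ ≤ mΩ') (hm₂ : m₂ ≤ mΩ') (hm₃ : m₃ ≤ mΩ')
    (h : ProbabilityTheory.CondIndep m' m₁ (m₂ ⊔ m₃) hm' μ) :
    ProbabilityTheory.CondIndep (m' ⊔ m₃) m₁ m₂ (sup_le hm' hm₃) μ := by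
  rw [ProbabilityTheory.condIndep_iff (m' ⊔ m₃) m₁ m₂ (sup_le hm' hm₃) hm₁ hm₂ μ]
  intro t1 t2 ht1 ht2
  have h1Ω : MeasurableSet[mΩ'] t1 := hm₁ t1 ht1
  have h2Ω : MeasurableSet[mΩ'] t2 := hm₂ t2 ht2
  set f1 : Ω' → ℝ := t1.indicator (fun _ => (1:ℝ)) with hf1_def
  set f2 : Ω' → ℝ := t2.indicator (fun _ => (1:ℝ)) with hf2_def
  have hn : m' ⊔ m₃ ≤ mΩ' := sup_le hm' hm₃
  have hbig : m' ⊔ (m₂ ⊔ m₃) ≤ mΩ' := sup_le hm' (sup_le hm₂ hm₃)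
  have hnbig : m' ⊔ m₃ ≤ m' ⊔ (m₂ ⊔ m₃) :=
    sup_le le_sup_left ((le_sup_right : m₃ ≤ m₂ ⊔ m₃).trans le_sup_right)
  have hf1_int : Integrable f1 μ := (integrable_const (1:ℝ)).indicator h1Ω
  have hf2_int : Integrable f2 μ := (integrable_const (1:ℝ)).indicator h2Ω
  have h12 : (t1 ∩ t2).indicator (fun _ => (1:ℝ)) = f2 * f1 := by
    funext ω
    by_cases hω1 : ω ∈ t1 <;> by_cases hω2 : ω ∈ t2 <;>
      simp [hf1_def, hf2_def, hω1, hω2, Set.indicator_of_mem, Set.indicator_of_notMem,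
        Set.mem_inter_iff]
  have hA : μ[f1|m' ⊔ (m₂ ⊔ m₃)] =ᵐ[μ] μ[f1|m'] :=
    aux_condExp_indicator_sup_of_condIndep hm' hm₁ (sup_le hm₂ hm₃) h ht1
  have hg_meas_n : StronglyMeasurable[m' ⊔ m₃] (μ[f1|m']) :=
    stronglyMeasurable_condExp.mono le_sup_left
  have hgf2 : (μ[f1|m']) * f2 = t2.indicator (μ[f1|m']) := by
    funext ω; by_cases hω : ω ∈ t2 <;>
      simp [hf2_def, hω, Set.indicator_of_mem, Set.indicator_of_notMem]
  have hgf2_int : Integrable ((μ[f1|m']) * f2) μ := by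
    rw [hgf2]; exact integrable_condExp.indicator h2Ω
  have h_t1 : μ[f1|m' ⊔ m₃] =ᵐ[μ] μ[f1|m'] := by
    calc μ[f1|m' ⊔ m₃]
        =ᵐ[μ] μ[μ[f1|m' ⊔ (m₂ ⊔ m₃)]|m' ⊔ m₃] := (condExp_condExp_of_le hnbig hbig).symm
      _ =ᵐ[μ] μ[μ[f1|m']|m' ⊔ m₃] := condExp_congr_ae hA
      _ = μ[f1|m'] := condExp_of_stronglyMeasurable hn hg_meas_n integrable_condExp
  have hf2big : StronglyMeasurable[m' ⊔ (m₂ ⊔ m₃)] f2 :=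
    (stronglyMeasurable_const.indicator ht2 :
      StronglyMeasurable[m₂] f2).mono (le_sup_left.trans le_sup_right)
  have hf21_int : Integrable (f2 * f1) μ := by
    rw [← h12]
    exact (integrable_const (1:ℝ)).indicator (h1Ω.inter h2Ω)
  have hX : μ[(t1 ∩ t2).indicator (fun _ => (1:ℝ))|m' ⊔ (m₂ ⊔ m₃)]
      =ᵐ[μ] f2 * (μ[f1|m']) := by
    rw [h12]
    calc μ[f2 * f1|m' ⊔ (m₂ ⊔ m₃)]
        =ᵐ[μ] f2 * μ[f1|m' ⊔ (m₂ ⊔ m₃)] :=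
          condExp_mul_of_stronglyMeasurable_left hf2big hf21_int hf1_int
      _ =ᵐ[μ] f2 * (μ[f1|m']) := Filter.EventuallyEq.mul (Filter.EventuallyEq.refl _ _) hA
  have hLHS : μ[(t1 ∩ t2).indicator (fun _ => (1:ℝ))|m' ⊔ m₃]
      =ᵐ[μ] (μ[f1|m']) * μ[f2|m' ⊔ m₃] := by
    calc μ[(t1 ∩ t2).indicator (fun _ => (1:ℝ))|m' ⊔ m₃]
        =ᵐ[μ] μ[μ[(t1 ∩ t2).indicator (fun _ => (1:ℝ))|m' ⊔ (m₂ ⊔ m₃)]|m' ⊔ m₃] :=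
          (condExp_condExp_of_le hnbig hbig).symm
      _ =ᵐ[μ] μ[f2 * (μ[f1|m'])|m' ⊔ m₃] := condExp_congr_ae hX
      _ = μ[(μ[f1|m']) * f2|m' ⊔ m₃] := by rw [mul_comm]
      _ =ᵐ[μ] (μ[f1|m']) * μ[f2|m' ⊔ m₃] :=
          condExp_mul_of_stronglyMeasurable_left hg_meas_n hgf2_int hf2_int
  refine hLHS.trans ?_
  exact (Filter.EventuallyEq.mul h_t1 (Filter.EventuallyEq.refl _ _)).symm

end WeakUnion

section FamLemmas

variable {V Ω Val : Type*} [MeasurableSpace Ω] [StandardBorelSpace Ω] [MeasurableSpace Val]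
  {X : V → Ω → Val} {hX : ∀ v, Measurable (X v)}
  {P : MeasureTheory.Measure Ω} [MeasureTheory.IsFiniteMeasure P]

lemma aux_famSigma_union (X : V → Ω → Val) (A B : Set V) :
    famSigma X (A ∪ B) = famSigma X A ⊔ famSigma X B := by
  unfold CFS.famSigma
  exact iSup_union

lemma aux_condIndep_of_eq {Ω' : Type*}
    {m' m'' m₁ m₂ : MeasurableSpace Ω'} [mΩ' : MeasurableSpace Ω'] [StandardBorelSpace Ω']
    {μ : MeasureTheory.Measure Ω'} [MeasureTheory.IsFiniteMeasure μ]
    {hm' : m' ≤ mΩ'} {hm'' : m'' ≤ mΩ'}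
    (h12 : m' = m'') (h : ProbabilityTheory.CondIndep m' m₁ m₂ hm' μ) :
    ProbabilityTheory.CondIndep m'' m₁ m₂ hm'' μ := by
  subst h12; exact h

lemma aux_condIndepFam_congr {S S' A A' B B' : Set V} (hS : S = S') (hA : A = A') (hB : B = B')
    (h : CondIndepFam X hX P S A B) : CondIndepFam X hX P S' A' B' := by
  subst hS hA hB; exact h

lemma aux_condIndepFam_weakUnion {S A B W : Set V} (h : CondIndepFam X hX P S A (B ∪ W)) :
    CondIndepFam X hX P (S ∪ W) A B := by
  have h' : ProbabilityTheory.CondIndep (famSigma X S) (famSigma X A)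
      (famSigma X B ⊔ famSigma X W) (famSigma_le hX S) P := by
    rw [← aux_famSigma_union]; exact h
  have h2 := aux_condIndep_weakUnion (famSigma_le hX S) (famSigma_le hX A) (famSigma_le hX B)
    (famSigma_le hX W) h'
  exact aux_condIndep_of_eq (aux_famSigma_union X S W).symm h2

end FamLemmas

/-- Under the intersection property, the intersection of two Markov blankets of `C`
is a Markov blanket of `C`; consequently the Markov boundary of `C` is unique. -/
theorem stmt_12
    {V Ω Val : Type*} [Fintype V] [MeasurableSpace Ω] [StandardBorelSpace Ω]
    [MeasurableSpace Val] [DiscreteMeasurableSpace Val] [Fintype Val] [Nonempty Val]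
    (X : V → Ω → Val) (hX : ∀ v, Measurable (X v))
    (P : MeasureTheory.Measure Ω) [MeasureTheory.IsProbabilityMeasure P]
    (hInt : IntersectionProperty X hX P) (C : V) :
    (∀ M₁ M₂ : Set V, IsMarkovBlanket X hX P C M₁ → IsMarkovBlanket X hX P C M₂ →
      IsMarkovBlanket X hX P C (M₁ ∩ M₂)) ∧
    (∀ M₁ M₂ : Set V, IsMarkovBoundary X hX P C M₁ → IsMarkovBoundary X hX P C M₂ →
      M₁ = M₂) := by
  classical
  have hInter : ∀ M₁ M₂ : Set V, IsMarkovBlanket X hX P C M₁ → IsMarkovBlanket X hX P C M₂ →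
      IsMarkovBlanket X hX P C (M₁ ∩ M₂) := by
    rintro M₁ M₂ ⟨hC1, h1⟩ ⟨hC2, h2⟩
    refine ⟨fun hc => hC1 hc.1, ?_⟩
    by_cases hBe : M₁ \ M₂ = ∅
    · have hsub : M₁ ⊆ M₂ := diff_eq_empty.mp hBe
      have hS : M₁ ∩ M₂ = M₁ := inter_eq_left.mpr hsub
      exact aux_condIndepFam_congr hS.symm rfl (by rw [hS]) h1
    · by_cases hDe : univ \ (M₁ ∪ {C}) = ∅
      · have hsub : M₂ ⊆ M₁ := by
          intro x hx
          have hxu : x ∈ M₁ ∪ {C} := diff_eq_empty.mp hDe (mem_univ x)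
          rcases hxu with hmem | hmem
          · exact hmem
          · exact absurd (mem_singleton_iff.mp hmem ▸ hx) hC2
        have hS : M₁ ∩ M₂ = M₂ := inter_eq_right.mpr hsub
        exact aux_condIndepFam_congr hS.symm rfl (by rw [hS]) h2
      · -- main case: apply the intersection property
        have hSB : (M₁ ∩ M₂) ∪ (M₁ \ M₂) = M₁ := by
          ext x
          simp only [mem_union, mem_inter_iff, mem_diff]
          tauto
        have hyp2 : CondIndepFam X hX P ((M₁ ∩ M₂) ∪ (M₁ \ M₂)) {C} (univ \ (M₁ ∪ {C})) :=
          aux_condIndepFam_congr hSB.symm rfl rfl h1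
        have hBR : univ \ (M₂ ∪ {C}) = (M₁ \ M₂) ∪ (univ \ (M₁ ∪ M₂ ∪ {C})) := by
          ext x
          have e1 : x ∈ M₁ → ¬ x = C := fun h hc => hC1 (hc ▸ h)
          have e2 : x ∈ M₂ → ¬ x = C := fun h hc => hC2 (hc ▸ h)
          simp only [mem_diff, mem_union, mem_univ, true_and, mem_singleton_iff]
          tauto
        have h2' : CondIndepFam X hX P M₂ {C} ((M₁ \ M₂) ∪ (univ \ (M₁ ∪ M₂ ∪ {C}))) :=
          aux_condIndepFam_congr rfl rfl hBR h2
        have hwu := aux_condIndepFam_weakUnion h2'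
        have hSD : M₂ ∪ (univ \ (M₁ ∪ M₂ ∪ {C})) = (M₁ ∩ M₂) ∪ (univ \ (M₁ ∪ {C})) := by
          ext x
          have e1 : x ∈ M₁ → ¬ x = C := fun h hc => hC1 (hc ▸ h)
          have e2 : x ∈ M₂ → ¬ x = C := fun h hc => hC2 (hc ▸ h)
          simp only [mem_union, mem_diff, mem_univ, true_and, mem_inter_iff, mem_singleton_iff]
          tauto
        have hyp1 : CondIndepFam X hX P ((M₁ ∩ M₂) ∪ (univ \ (M₁ ∪ {C}))) {C} (M₁ \ M₂) :=
          aux_condIndepFam_congr hSD rfl rfl hwu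
        have d1 : Disjoint ({C} : Set V) (M₁ \ M₂) :=
          disjoint_singleton_left.mpr fun hc => hC1 hc.1
        have d2 : Disjoint ({C} : Set V) (univ \ (M₁ ∪ {C})) :=
          disjoint_singleton_left.mpr fun hc => hc.2 (Or.inr rfl)
        have d3 : Disjoint ({C} : Set V) (M₁ ∩ M₂) :=
          disjoint_singleton_left.mpr fun hc => hC1 hc.1
        have d4 : Disjoint (M₁ \ M₂) (univ \ (M₁ ∪ {C})) := by
          rw [Set.disjoint_left]
          intro x hx hx'
          exact hx'.2 (Or.inl hx.1)
        have d5 : Disjoint (M₁ \ M₂) (M₁ ∩ M₂) := by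
          rw [Set.disjoint_left]
          intro x hx hx'
          exact hx.2 hx'.2
        have d6 : Disjoint (univ \ (M₁ ∪ {C})) (M₁ ∩ M₂) := by
          rw [Set.disjoint_left]
          intro x hx hx'
          exact hx.2 (Or.inl hx'.1)
        have hconc := hInt {C} (M₁ \ M₂) (univ \ (M₁ ∪ {C})) (M₁ ∩ M₂)
          (singleton_nonempty C) (nonempty_iff_ne_empty.mpr hBe) (nonempty_iff_ne_empty.mpr hDe)
          d1 d2 d3 d4 d5 d6 hyp1 hyp2
        have hfin : (M₁ \ M₂) ∪ (univ \ (M₁ ∪ {C})) = univ \ ((M₁ ∩ M₂) ∪ {C}) := by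
          ext x
          have e1 : x ∈ M₁ → ¬ x = C := fun h hc => hC1 (hc ▸ h)
          have e2 : x ∈ M₂ → ¬ x = C := fun h hc => hC2 (hc ▸ h)
          simp only [mem_union, mem_diff, mem_univ, true_and, mem_inter_iff, mem_singleton_iff]
          tauto
        exact aux_condIndepFam_congr rfl rfl hfin hconc
  refine ⟨hInter, ?_⟩
  rintro M₁ M₂ ⟨hb1, hmin1⟩ ⟨hb2, hmin2⟩
  have hblk := hInter M₁ M₂ hb1 hb2
  have e1 : M₁ ∩ M₂ = M₁ := by
    by_contra hne
    exact hmin1 (M₁ ∩ M₂) (ssubset_iff_subset_ne.mpr ⟨inter_subset_left, hne⟩) hblk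
  have e2 : M₁ ∩ M₂ = M₂ := by
    by_contra hne
    exact hmin2 (M₁ ∩ M₂) (ssubset_iff_subset_ne.mpr ⟨inter_subset_right, hne⟩) hblk
  rw [← e1, e2]
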